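/- Let T be a tree of order n ≥ 4 with metric dimension ε(T). Then the second Zagreb index satisfies M₂(T) ≥ 4n + ε(T) − 9, with equality when T is the path P_n. -/

import Mathlib

open scoped Classical

/-- Degree of a vertex. -/
noncomputable def deg {V : Type*} [Fintype V] (G : SimpleGraph V) (v : V) : ℕ :=
  (Finset.univ.filter (fun u => G.Adj v u)).card

/-- First Zagreb index: sum of squares of degrees. -/
noncomputable def M1 {V : Type*} [Fintype V] (G : SimpleGraph V) : ℕ :=
  ∑ v, (deg G v) ^ 2

/-- Second Zagreb index: sum over edges of products of endpoint degrees. -/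
noncomputable def M2 {V : Type*} [Fintype V] (G : SimpleGraph V) : ℕ :=
  ∑ e ∈ G.edgeFinset,
    Sym2.lift ⟨fun u v => deg G u * deg G v, fun u v => Nat.mul_comm _ _⟩ e

/-- Atom-bond connectivity index. -/
noncomputable def ABC {V : Type*} [Fintype V] (G : SimpleGraph V) : ℝ :=
  ∑ e ∈ G.edgeFinset,
    Sym2.lift ⟨fun u v =>
      Real.sqrt (((deg G u : ℝ) + (deg G v : ℝ) - 2) / ((deg G u : ℝ) * (deg G v : ℝ))),
      fun u v => by dsimp only; rw [add_comm ((deg G u : ℝ)), mul_comm ((deg G u : ℝ))]⟩ e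

/-- A set of vertices is resolving if every pair of distinct vertices is
distinguished by its distance to some member of the set. -/
def IsResolving {V : Type*} [Fintype V] (G : SimpleGraph V) (S : Finset V) : Prop :=
  ∀ u v : V, u ≠ v → ∃ s ∈ S, G.dist u s ≠ G.dist v s

/-- The metric dimension: minimum size of a resolving set. -/
noncomputable def metricDim {V : Type*} [Fintype V] (G : SimpleGraph V) : ℕ :=
  sInf {k | ∃ S : Finset V, IsResolving G S ∧ S.card = k}

/-- The star graph on `n` vertices: vertex `0` is adjacent to all others. -/
def starGraph (n : ℕ) : SimpleGraph (Fin n) where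
  Adj u v := u ≠ v ∧ (u.val = 0 ∨ v.val = 0)
  symm := by constructor; intro u v h; exact ⟨h.1.symm, h.2.symm⟩
  loopless := ⟨fun v h => h.1 rfl⟩

section Aux
open SimpleGraph Finset

lemma iso_dist_le {V W : Type*} {G : SimpleGraph V} {H : SimpleGraph W} (e : G ≃g H)
    (u v : V) : H.dist (e u) (e v) ≤ G.dist u v := by
  by_cases hr : G.Reachable u v
  · obtain ⟨p, hp⟩ := hr.exists_walk_length_eq_dist
    calc H.dist (e u) (e v) ≤ (p.map e.toHom).length := SimpleGraph.dist_le _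
    _ = G.dist u v := by rw [SimpleGraph.Walk.length_map, hp]
  · have hr' : ¬ H.Reachable (e u) (e v) := by
      intro ⟨q⟩
      exact hr ⟨(q.map e.symm.toHom).copy (by simp) (by simp)⟩
    rw [SimpleGraph.dist_eq_zero_of_not_reachable hr,
      SimpleGraph.dist_eq_zero_of_not_reachable hr']

lemma iso_dist {V W : Type*} {G : SimpleGraph V} {H : SimpleGraph W} (e : G ≃g H)
    (u v : V) : H.dist (e u) (e v) = G.dist u v := by
  refine le_antisymm (iso_dist_le e u v) ?_
  have := iso_dist_le e.symm (e u) (e v)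
  simpa using this

lemma pg_walk_le {n : ℕ} {i j : Fin n} (p : (pathGraph n).Walk i j) :
    i.val ≤ j.val + p.length ∧ j.val ≤ i.val + p.length := by
  induction p with
  | nil => omega
  | cons h q ih =>
    rw [pathGraph_adj] at h
    rw [SimpleGraph.Walk.length_cons]
    omega

lemma pg_dist_zero {n : ℕ} (hn : 0 < n) (i : Fin n) :
    (pathGraph n).dist i ⟨0, hn⟩ = i.val := by
  obtain ⟨m, rfl⟩ : ∃ m, n = m + 1 := ⟨n - 1, by omega⟩
  refine le_antisymm ?_ ?_
  · -- upper: induction on i.val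
    have key : ∀ k (i : Fin (m+1)), i.val = k → (pathGraph (m+1)).dist i ⟨0, hn⟩ ≤ k := by
      intro k
      induction k with
      | zero => intro i hi; have : i = ⟨0, hn⟩ := Fin.ext hi; simp [this]
      | succ k ih =>
        intro i hi
        have hk : k < m + 1 := by omega
        have hadj : (pathGraph (m+1)).Adj i ⟨k, hk⟩ := by
          rw [pathGraph_adj]; right; simp [hi]
        calc (pathGraph (m+1)).dist i ⟨0, hn⟩
            ≤ (pathGraph (m+1)).dist i ⟨k, hk⟩ + (pathGraph (m+1)).dist ⟨k, hk⟩ ⟨0, hn⟩ :=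
              (pathGraph_connected m).dist_triangle
          _ ≤ 1 + k := by
              have h1 : (pathGraph (m+1)).dist i ⟨k, hk⟩ = 1 :=
                SimpleGraph.dist_eq_one_iff_adj.2 hadj
              have h2 := ih ⟨k, hk⟩ rfl
              omega
          _ = k + 1 := by omega
    exact key i.val i rfl
  · obtain ⟨p, hp⟩ := ((pathGraph_connected m) i ⟨0, hn⟩).exists_walk_length_eq_dist
    have := pg_walk_le p
    simp only [hp] at this
    omega

lemma pg_deg {n : ℕ} (hn : 2 ≤ n) (i : Fin n) :
    deg (pathGraph n) i = if i.val = 0 ∨ i.val = n - 1 then 1 else 2 := by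
  unfold deg
  split_ifs with h
  · rcases h with h | h
    · have h1 : (1 : ℕ) < n := by omega
      have : Finset.univ.filter (fun u => (pathGraph n).Adj i u) = {⟨1, h1⟩} := by
        ext u
        simp only [Finset.mem_filter, Finset.mem_univ, true_and, Finset.mem_singleton,
          pathGraph_adj]
        constructor
        · rintro (hu | hu) <;> (apply Fin.ext; simp; omega)
        · rintro rfl; left; simp [h]
      rw [this]; simp
    · have h1 : n - 2 < n := by omega
      have : Finset.univ.filter (fun u => (pathGraph n).Adj i u) = {⟨n - 2, h1⟩} := by
        ext u
        simp only [Finset.mem_filter, Finset.mem_univ, true_and, Finset.mem_singleton,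
          pathGraph_adj]
        constructor
        · rintro (hu | hu) <;> (apply Fin.ext; simp; omega)
        · rintro rfl; right; simp; omega
      rw [this]; simp
  · push_neg at h
    obtain ⟨h0, hl⟩ := h
    have hi := i.isLt
    have h1 : i.val - 1 < n := by omega
    have h2 : i.val + 1 < n := by omega
    have : Finset.univ.filter (fun u => (pathGraph n).Adj i u) = {⟨i.val - 1, h1⟩, ⟨i.val + 1, h2⟩} := by
      ext u
      simp only [Finset.mem_filter, Finset.mem_univ, true_and, Finset.mem_insert,
        Finset.mem_singleton, pathGraph_adj]
      constructor
      · rintro (hu | hu)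
        · right; apply Fin.ext; simp; omega
        · left; apply Fin.ext; simp; omega
      · rintro (rfl | rfl)
        · right
          show i.val - 1 + 1 = i.val
          omega
        · left
          show i.val + 1 = i.val + 1
          rfl
    rw [this]
    rw [Finset.card_insert_of_notMem (by simp only [Finset.mem_singleton, Fin.mk.injEq]; omega), Finset.card_singleton]

lemma pg_M2 {n : ℕ} (hn : 4 ≤ n) : M2 (pathGraph n) = 4 * n - 8 := by
  set g : ℕ → ℕ := fun a =>
    (if a = 0 ∨ a = n - 1 then 1 else 2) * (if a + 1 = 0 ∨ a + 1 = n - 1 then 1 else 2) with hg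
  have key : M2 (pathGraph n) = ∑ a ∈ Finset.range (n - 1), g a := by
    unfold M2
    refine (Finset.sum_bij (fun a ha => s((⟨a, by have := Finset.mem_range.1 ha; omega⟩ : Fin n),
        (⟨a + 1, by have := Finset.mem_range.1 ha; omega⟩ : Fin n))) ?_ ?_ ?_ ?_).symm
    · intro a ha
      rw [SimpleGraph.mem_edgeFinset, SimpleGraph.mem_edgeSet, pathGraph_adj]
      left; rfl
    · intro a ha b hb hab
      have := Sym2.eq_iff.1 hab
      rcases this with ⟨h1, _⟩ | ⟨h1, h2⟩
      · exact congrArg Fin.val h1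
      · have e1 := congrArg Fin.val h1
        have e2 := congrArg Fin.val h2
        simp only [Fin.val_mk] at e1 e2 -- may need fix
        omega
    · intro e he
      rw [SimpleGraph.mem_edgeFinset] at he
      induction e with
      | _ x y =>
        rw [SimpleGraph.mem_edgeSet, pathGraph_adj] at he
        rcases he with h | h
        · refine ⟨x.val, Finset.mem_range.2 (by have := y.isLt; omega), ?_⟩
          rw [Sym2.eq_iff]; left
          constructor <;> (apply Fin.ext; simp [h])
        · refine ⟨y.val, Finset.mem_range.2 (by have := x.isLt; omega), ?_⟩
          rw [Sym2.eq_iff]; right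
          constructor <;> (apply Fin.ext; simp [h])
    · intro a ha
      have ha' := Finset.mem_range.1 ha
      rw [Sym2.lift_mk]
      show g a = deg (pathGraph n) _ * deg (pathGraph n) _
      rw [pg_deg (by omega), pg_deg (by omega), hg]
  rw [key]
  have sum4 : ∑ a ∈ Finset.range (n - 1),
      (g a + ((if a = 0 then 2 else 0) + (if a = n - 2 then 2 else 0))) = 4 * (n - 1) := by
    rw [Finset.sum_congr rfl (g := fun _ => 4)]
    · rw [Finset.sum_const, Finset.card_range]; ring
    · intro a ha
      have ha' := Finset.mem_range.1 ha
      rw [hg]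
      simp only
      have e1 : (a = 0 ∨ a = n - 1) ↔ (a = 0) := by omega
      have e2 : (a + 1 = 0 ∨ a + 1 = n - 1) ↔ (a = n - 2) := by omega
      simp only [e1, e2]
      split_ifs <;> omega
  rw [Finset.sum_add_distrib, Finset.sum_add_distrib] at sum4
  rw [Finset.sum_ite_eq' (Finset.range (n-1)) 0 (fun _ => 2),
    Finset.sum_ite_eq' (Finset.range (n-1)) (n-2) (fun _ => 2)] at sum4
  simp only [Finset.mem_range] at sum4
  rw [if_pos (by omega), if_pos (by omega)] at sum4
  omega

lemma md_path {V : Type*} [Fintype V] (T : SimpleGraph V)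
    (hn : 2 ≤ Fintype.card V) (e : T ≃g SimpleGraph.pathGraph (Fintype.card V)) :
    metricDim T = 1 := by
  set n := Fintype.card V with hnn
  have hn0 : 0 < n := by omega
  set s₀ : V := e.symm ⟨0, hn0⟩ with hs₀
  have hres : IsResolving T {s₀} := by
    intro u v huv
    refine ⟨s₀, Finset.mem_singleton_self _, ?_⟩
    have h1 : T.dist u s₀ = (e u).val := by
      rw [← iso_dist e u s₀, hs₀, RelIso.apply_symm_apply, pg_dist_zero]
    have h2 : T.dist v s₀ = (e v).val := by
      rw [← iso_dist e v s₀, hs₀, RelIso.apply_symm_apply, pg_dist_zero]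
    rw [h1, h2]
    intro hcon
    exact huv (e.injective (Fin.ext hcon))
  have h1mem : 1 ∈ {k | ∃ S : Finset V, IsResolving T S ∧ S.card = k} :=
    ⟨{s₀}, hres, Finset.card_singleton _⟩
  refine le_antisymm (Nat.sInf_le h1mem) ?_
  rw [Nat.one_le_iff_ne_zero]
  intro h0
  rw [metricDim, Nat.sInf_eq_zero] at h0
  rcases h0 with h0 | h0
  · obtain ⟨S, hS, hcard⟩ := h0
    rw [Finset.card_eq_zero] at hcard
    obtain ⟨u, v, huv⟩ := Fintype.exists_pair_of_one_lt_card (by omega : 1 < Fintype.card V)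
    obtain ⟨s, hs, -⟩ := hS u v huv
    simp [hcard] at hs
  · exact (Set.eq_empty_iff_forall_notMem.1 h0) 1 h1mem

lemma iso_deg {V W : Type*} [Fintype V] [Fintype W] {G : SimpleGraph V} {H : SimpleGraph W}
    (e : G ≃g H) (v : V) : deg H (e v) = deg G v := by
  unfold deg
  refine Finset.card_bij' (fun u _ => e.symm u) (fun u _ => e u) ?_ ?_ ?_ ?_
  · intro u hu
    simp only [Finset.mem_filter, Finset.mem_univ, true_and] at hu ⊢
    have := e.symm.map_rel_iff (a := e v) (b := u)
    rw [← this] at hu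
    simpa using hu
  · intro u hu
    simp only [Finset.mem_filter, Finset.mem_univ, true_and] at hu ⊢
    exact e.map_rel_iff.2 hu
  · intro u _; simp
  · intro u _; simp

lemma iso_M2 {V W : Type*} [Fintype V] [Fintype W] {G : SimpleGraph V} {H : SimpleGraph W}
    (e : G ≃g H) : M2 G = M2 H := by
  unfold M2
  refine Finset.sum_nbij' (fun x => Sym2.map e x) (fun x => Sym2.map e.symm x) ?_ ?_ ?_ ?_ ?_
  · intro x hx
    induction x with
    | _ a b =>
      rw [SimpleGraph.mem_edgeFinset, SimpleGraph.mem_edgeSet] at hx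
      simp only [Sym2.map_pair_eq, SimpleGraph.mem_edgeFinset, SimpleGraph.mem_edgeSet]
      exact e.map_adj_iff.2 hx
  · intro x hx
    induction x with
    | _ a b =>
      rw [SimpleGraph.mem_edgeFinset, SimpleGraph.mem_edgeSet] at hx
      simp only [Sym2.map_pair_eq, SimpleGraph.mem_edgeFinset, SimpleGraph.mem_edgeSet]
      exact e.symm.map_adj_iff.2 hx
  · intro x _
    induction x with
    | _ a b => simp
  · intro x _
    induction x with
    | _ a b => simp
  · intro x hx
    induction x with
    | _ a b => simp [Sym2.map_pair_eq, Sym2.lift_mk, iso_deg e]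

lemma exists_far_leaf {V : Type*} [Fintype V] {T : SimpleGraph V} (hT : T.IsTree)
    {u v : V} (huv : u ≠ v) :
    ∃ x : V, deg T x = 1 ∧ T.dist u x < T.dist v x := by
  classical
  have hc : T.Connected := hT.isConnected
  set F : Finset V := Finset.univ.filter (fun x => T.dist v x = T.dist v u + T.dist u x) with hF
  have huF : u ∈ F := by simp [hF]
  obtain ⟨x, hxF, hmax⟩ := F.exists_max_image (fun x => T.dist v x) ⟨u, huF⟩
  rw [hF, Finset.mem_filter] at hxF
  replace hxF : T.dist v x = T.dist v u + T.dist u x := hxF.2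
  have hvu : 0 < T.dist v u := hc.pos_dist_of_ne (Ne.symm huv)
  have hvx : 0 < T.dist v x := by omega
  have hxv : x ≠ v := by
    rintro rfl
    rw [SimpleGraph.dist_comm, SimpleGraph.dist_self] at hvx
    omega
  suffices hdeg : deg T x = 1 by
    exact ⟨x, hdeg, by omega⟩
  set d := T.dist v x with hd
  -- geodesic from v to x
  obtain ⟨p, hp⟩ := (hc v x).exists_walk_length_eq_dist
  have hpPath : p.IsPath := p.isPath_of_length_eq_dist hp
  obtain ⟨y, hxy, q, hq⟩ := SimpleGraph.Walk.exists_eq_cons_of_ne hxv p.reverse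
  have hqlen : q.length = d - 1 := by
    have := congrArg SimpleGraph.Walk.length hq
    rw [SimpleGraph.Walk.length_reverse, SimpleGraph.Walk.length_cons] at this
    omega
  have hprPath : p.reverse.IsPath := hpPath.reverse
  -- the key claim
  have hclaim : ∀ z, T.Adj x z → z ≠ y → T.dist v z = d + 1 := by
    intro z hz hzy
    by_contra hne
    have hle : T.dist v z ≤ d + 1 := by
      have h1 : T.dist x z = 1 := SimpleGraph.dist_eq_one_iff_adj.2 hz
      have := hc.dist_triangle (u := v) (v := x) (w := z)
      omega
    have hlt : T.dist v z ≤ d := by omega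
    obtain ⟨r, hr⟩ := (hc v z).exists_walk_length_eq_dist
    have hrPath : r.IsPath := r.isPath_of_length_eq_dist hr
    have hxr : x ∉ r.support := by
      intro hmem
      have h1 : T.dist v x ≤ (r.takeUntil x hmem).length := SimpleGraph.dist_le _
      have h2 : (r.takeUntil x hmem).length + (r.dropUntil x hmem).length = r.length := by
        rw [← SimpleGraph.Walk.length_append, SimpleGraph.Walk.take_spec]
      have h3 : (r.dropUntil x hmem).length ≠ 0 := by
        intro h0
        exact hz.ne (SimpleGraph.Walk.eq_of_length_eq_zero h0)
      omega
    -- two paths from x to v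
    have hP2 : (SimpleGraph.Walk.cons hz r.reverse).IsPath := by
      apply hrPath.reverse.cons
      rwa [SimpleGraph.Walk.support_reverse, List.mem_reverse]
    have hEq : p.reverse = SimpleGraph.Walk.cons hz r.reverse :=
      (hT.existsUnique_path x v).unique hprPath hP2
    rw [hq] at hEq
    have hsup := congrArg SimpleGraph.Walk.support hEq
    rw [SimpleGraph.Walk.support_cons, SimpleGraph.Walk.support_cons,
      q.support_eq_cons, r.reverse.support_eq_cons] at hsup
    simp at hsup
    have h2 := q.support_eq_cons
    rw [hsup] at h2
    exact hzy (List.cons.inj h2).1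
  -- x has a neighbor: y
  have hyN : y ∈ Finset.univ.filter (fun w => T.Adj x w) := by
    simp only [Finset.mem_filter, Finset.mem_univ, true_and]
    exact hxy
  have hdegeq : deg T x = (Finset.univ.filter (fun w => T.Adj x w)).card := rfl
  have hdeg1 : 1 ≤ (Finset.univ.filter (fun w => T.Adj x w)).card :=
    Finset.card_pos.2 ⟨y, hyN⟩
  by_contra hne
  rw [hdegeq] at hne
  have hdeg2 : 1 < (Finset.univ.filter (fun w => T.Adj x w)).card := by omega
  obtain ⟨z, hzN, hzy⟩ := Finset.exists_mem_ne hdeg2 y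
  simp only [Finset.mem_filter, Finset.mem_univ, true_and] at hzN
  have hdz : T.dist v z = d + 1 := hclaim z hzN hzy
  -- z ∈ F
  have huz : T.dist u z ≤ T.dist u x + 1 := by
    have h1 : T.dist x z = 1 := SimpleGraph.dist_eq_one_iff_adj.2 hzN
    have := hc.dist_triangle (u := u) (v := x) (w := z)
    omega
  have htri : T.dist v z ≤ T.dist v u + T.dist u z := hc.dist_triangle
  have hzF : z ∈ F := by
    rw [hF, Finset.mem_filter]
    exact ⟨Finset.mem_univ _, by omega⟩
  have := hmax z hzF
  omega

lemma md_le_leaves {V : Type*} [Fintype V] {T : SimpleGraph V} (hT : T.IsTree)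
    (hn : 2 ≤ Fintype.card V) :
    metricDim T + 1 ≤ (Finset.univ.filter (fun x => deg T x = 1)).card := by
  classical
  set leaves := Finset.univ.filter (fun x => deg T x = 1) with hlv
  obtain ⟨a, b, hab⟩ := Fintype.exists_pair_of_one_lt_card (by omega : 1 < Fintype.card V)
  obtain ⟨ℓ₀, hℓ₀, -⟩ := exists_far_leaf hT hab
  have hℓ₀mem : ℓ₀ ∈ leaves := by simp [hlv, hℓ₀]
  have hres : IsResolving T (leaves.erase ℓ₀) := by
    intro u v huv
    obtain ⟨x, hx1, hx2⟩ := exists_far_leaf hT huv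
    obtain ⟨x', hx'1, hx'2⟩ := exists_far_leaf hT (Ne.symm huv)
    by_cases hx : x = ℓ₀
    · refine ⟨x', Finset.mem_erase.2 ⟨?_, by simp [hlv, hx'1]⟩, by omega⟩
      rintro rfl
      rw [hx] at hx2
      omega
    · exact ⟨x, Finset.mem_erase.2 ⟨hx, by simp [hlv, hx1]⟩, by omega⟩
  have h1 : metricDim T ≤ (leaves.erase ℓ₀).card :=
    Nat.sInf_le ⟨leaves.erase ℓ₀, hres, rfl⟩
  rw [Finset.card_erase_of_mem hℓ₀mem] at h1
  have h2 : 1 ≤ leaves.card := Finset.card_pos.2 ⟨ℓ₀, hℓ₀mem⟩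
  omega

lemma leaf_nbhd {V : Type*} [Fintype V] {T : SimpleGraph V} {u v : V}
    (huv : T.Adj u v) (hu : deg T u = 1) :
    Finset.univ.filter (fun w => T.Adj u w) = {v} := by
  obtain ⟨a, ha⟩ := Finset.card_eq_one.1 hu
  have hv : v ∈ Finset.univ.filter (fun w => T.Adj u w) := by simp [huv]
  rw [ha] at hv ⊢
  rw [Finset.mem_singleton] at hv
  rw [hv]

lemma leaf_nbhd_not_leaf {V : Type*} [Fintype V] {T : SimpleGraph V} (hc : T.Connected)
    (hn : 3 ≤ Fintype.card V) {u v : V} (huv : T.Adj u v) (hu : deg T u = 1) :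
    deg T v ≠ 1 := by
  intro hv
  have hNu := leaf_nbhd huv hu
  have hNv := leaf_nbhd huv.symm hv
  have key : ∀ (a w : V) (p : T.Walk a w), (a = u ∨ a = v) → (w = u ∨ w = v) := by
    intro a w p
    induction p with
    | nil => exact id
    | @cons a b w hab q ih =>
      intro ha
      apply ih
      rcases ha with rfl | rfl
      · right
        have : b ∈ Finset.univ.filter (fun w => T.Adj a w) := by simp [hab]
        rw [hNu, Finset.mem_singleton] at this
        exact this
      · left
        have : b ∈ Finset.univ.filter (fun w => T.Adj a w) := by simp [hab]
        rw [hNv, Finset.mem_singleton] at this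
        exact this
  -- find a third vertex
  have : ({u, v} : Finset V) ⊂ Finset.univ := by
    refine Finset.ssubset_univ_iff.2 ?_
    intro h
    have h2 : (Finset.univ : Finset V).card ≤ 2 := by
      rw [← h]
      exact (Finset.card_insert_le _ _).trans (by simp)
    rw [Finset.card_univ] at h2
    omega
  obtain ⟨w, -, hw⟩ := Finset.exists_of_ssubset this
  simp only [Finset.mem_insert, Finset.mem_singleton, not_or] at hw
  obtain ⟨p⟩ := hc u w
  rcases key u w p (Or.inl rfl) with h | h
  · exact hw.1 h
  · exact hw.2 h

lemma sum_pairs_eq_two_mul_edges {V : Type*} [Fintype V] (G : SimpleGraph V)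
    (f : V → V → ℤ) (hf : ∀ u v, f u v = f v u) :
    ∑ p ∈ Finset.univ.filter (fun p : V × V => G.Adj p.1 p.2), f p.1 p.2
      = 2 * ∑ e ∈ G.edgeFinset, Sym2.lift ⟨f, hf⟩ e := by
  classical
  rw [← Finset.sum_fiberwise_of_maps_to (g := fun p : V × V => s(p.1, p.2))
    (t := G.edgeFinset) (fun p hp => by
      simp only [Finset.mem_filter, Finset.mem_univ, true_and] at hp
      rw [SimpleGraph.mem_edgeFinset]
      exact hp) (fun p => f p.1 p.2), Finset.mul_sum]
  refine Finset.sum_congr rfl ?_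
  intro e he
  induction e with
  | _ a b =>
    rw [SimpleGraph.mem_edgeFinset, SimpleGraph.mem_edgeSet] at he
    have hfib : (Finset.univ.filter (fun p : V × V => G.Adj p.1 p.2)).filter
        (fun p => s(p.1, p.2) = s(a, b)) = {(a, b), (b, a)} := by
      ext ⟨c, d⟩
      simp only [Finset.mem_filter, Finset.mem_univ, true_and, Finset.mem_insert,
        Finset.mem_singleton, Prod.mk.injEq, Sym2.eq_iff]
      constructor
      · rintro ⟨hadj, (⟨rfl, rfl⟩ | ⟨rfl, rfl⟩)⟩
        · left; exact ⟨rfl, rfl⟩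
        · right; exact ⟨rfl, rfl⟩
      · rintro (⟨rfl, rfl⟩ | ⟨rfl, rfl⟩)
        · exact ⟨he, Or.inl ⟨rfl, rfl⟩⟩
        · exact ⟨he.symm, Or.inr ⟨rfl, rfl⟩⟩
    rw [hfib]
    rw [Finset.sum_insert (by simp [Prod.ext_iff]; exact fun h => (he.ne h).elim),
      Finset.sum_singleton]
    rw [Sym2.lift_mk]
    simp only
    rw [hf b a]
    ring

lemma sum_pairs_eq_sum_nbhd {V : Type*} [Fintype V] (G : SimpleGraph V) (f : V → V → ℤ) :
    ∑ p ∈ Finset.univ.filter (fun p : V × V => G.Adj p.1 p.2), f p.1 p.2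
      = ∑ v, ∑ u ∈ Finset.univ.filter (fun u => G.Adj v u), f v u := by
  classical
  rw [Finset.sum_filter, Fintype.sum_prod_type]
  refine Finset.sum_congr rfl ?_
  intro v _
  rw [Finset.sum_filter]

lemma sum_pairs_swap {V : Type*} [Fintype V] (G : SimpleGraph V) (f : V → V → ℤ) :
    ∑ p ∈ Finset.univ.filter (fun p : V × V => G.Adj p.1 p.2), f p.1 p.2
      = ∑ p ∈ Finset.univ.filter (fun p : V × V => G.Adj p.1 p.2), f p.2 p.1 := by
  classical
  refine Finset.sum_nbij' (fun p => p.swap) (fun p => p.swap) ?_ ?_ ?_ ?_ ?_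
  · intro p hp
    simp only [Finset.mem_filter, Finset.mem_univ, true_and] at hp ⊢
    exact hp.symm
  · intro p hp
    simp only [Finset.mem_filter, Finset.mem_univ, true_and] at hp ⊢
    exact hp.symm
  · intro p _; simp
  · intro p _; simp
  · intro p _; rfl

lemma sum_pairs_eq_sum_nbhd' {V : Type*} [Fintype V] (G : SimpleGraph V) (f : V → V → ℤ) :
    ∑ p ∈ Finset.univ.filter (fun p : V × V => G.Adj p.1 p.2), f p.2 p.1
      = ∑ v, ∑ u ∈ Finset.univ.filter (fun u => G.Adj v u), f u v := by
  exact sum_pairs_eq_sum_nbhd G (fun a b => f b a)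

lemma M2_ge {V : Type*} [Fintype V] {T : SimpleGraph V} (hT : T.IsTree)
    (hn : 4 ≤ Fintype.card V) :
    4 * Fintype.card V + (Finset.univ.filter (fun x => deg T x = 1)).card ≤ M2 T + 10 := by
  classical
  have hc : T.Connected := hT.isConnected
  set n := Fintype.card V with hnn
  set D : V → ℤ := fun v => (deg T v : ℤ) with hD
  set leaves := Finset.univ.filter (fun x => deg T x = 1) with hlv
  set L : ℤ := (leaves.card : ℤ) with hL
  set P := Finset.univ.filter (fun p : V × V => T.Adj p.1 p.2) with hP
  set N : V → Finset V := fun v => Finset.univ.filter (fun u => T.Adj v u) with hN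
  -- edge count
  have hE : T.edgeFinset.card + 1 = n := hT.card_edgeFinset
  -- number of adjacent pairs
  have hPcard : ∑ p ∈ P, (1 : ℤ) = 2 * ((n : ℤ) - 1) := by
    rw [hP, sum_pairs_eq_two_mul_edges T (fun _ _ => (1:ℤ)) (fun _ _ => rfl)]
    have : ∑ e ∈ T.edgeFinset, Sym2.lift ⟨fun _ _ => (1:ℤ), fun _ _ => rfl⟩ e
        = (T.edgeFinset.card : ℤ) := by
      rw [Finset.card_eq_sum_ones, Nat.cast_sum]
      refine Finset.sum_congr rfl ?_
      intro e _
      induction e with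
      | _ a b => rw [Sym2.lift_mk]; simp
    rw [this]
    have : (T.edgeFinset.card : ℤ) = (n : ℤ) - 1 := by
      have := hE; push_cast [← this]; ring
    rw [this]
  -- handshake
  have hHand : ∑ v, D v = 2 * ((n : ℤ) - 1) := by
    rw [← hPcard, hP, sum_pairs_eq_sum_nbhd T (fun _ _ => (1:ℤ))]
    refine Finset.sum_congr rfl ?_
    intro v _
    rw [Finset.sum_const, nsmul_eq_mul, mul_one, hD]
    rfl
  -- M2 as pair sum
  have hM2 : ∑ p ∈ P, (D p.1 * D p.2) = 2 * (M2 T : ℤ) := by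
    rw [hP, sum_pairs_eq_two_mul_edges T (fun a b => D a * D b)
      (fun a b => mul_comm (D a) (D b))]
    congr 1
    rw [M2, Nat.cast_sum]
    refine Finset.sum_congr rfl ?_
    intro e _
    induction e with
    | _ a b => rw [Sym2.lift_mk, Sym2.lift_mk]; push_cast; rfl
  -- the weight function
  set A : V → V → ℤ := fun a b =>
    if deg T a = 1 then (-3 : ℤ) else if deg T b = 1 then D a - 1 else D a - 2 with hA
  -- pairwise inequality
  have hpair : ∀ p ∈ P, A p.1 p.2 + A p.2 p.1 ≤ D p.1 * D p.2 - 4 := by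
    rintro ⟨a, b⟩ hp
    simp only [hP, Finset.mem_filter, Finset.mem_univ, true_and] at hp
    have ha1 : 1 ≤ deg T a := Finset.card_pos.2 ⟨b, by simp [hp]⟩
    have hb1 : 1 ≤ deg T b := Finset.card_pos.2 ⟨a, by simp [hp.symm]⟩
    simp only [hA, hD]
    by_cases ha : deg T a = 1 <;> by_cases hb : deg T b = 1 <;>
      simp only [ha, hb, if_true, if_false, ite_true, ite_false]
    · norm_num
    · have : (2 : ℤ) ≤ (deg T b : ℤ) := by exact_mod_cast (by omega : 2 ≤ deg T b)
      push_cast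
      nlinarith
    · have : (2 : ℤ) ≤ (deg T a : ℤ) := by exact_mod_cast (by omega : 2 ≤ deg T a)
      push_cast
      nlinarith
    · have ha2 : (2 : ℤ) ≤ (deg T a : ℤ) := by exact_mod_cast (by omega : 2 ≤ deg T a)
      have hb2 : (2 : ℤ) ≤ (deg T b : ℤ) := by exact_mod_cast (by omega : 2 ≤ deg T b)
      nlinarith
  -- sum the pairwise inequality
  have hsum1 : 2 * ∑ p ∈ P, A p.1 p.2 ≤ 2 * (M2 T : ℤ) - 8 * ((n : ℤ) - 1) := by
    have e1 : ∑ p ∈ P, A p.2 p.1 = ∑ p ∈ P, A p.1 p.2 := by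
      rw [hP, ← sum_pairs_swap T A]
    calc 2 * ∑ p ∈ P, A p.1 p.2 = ∑ p ∈ P, (A p.1 p.2 + A p.2 p.1) := by
          rw [Finset.sum_add_distrib, e1]; ring
      _ ≤ ∑ p ∈ P, (D p.1 * D p.2 - 4) := Finset.sum_le_sum hpair
      _ = ∑ p ∈ P, (D p.1 * D p.2) - ∑ p ∈ P, (4:ℤ) := Finset.sum_sub_distrib _ _
      _ = 2 * (M2 T : ℤ) - 8 * ((n : ℤ) - 1) := by
          have h4 : ∑ p ∈ P, (4:ℤ) = 4 * ∑ p ∈ P, (1:ℤ) := by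
            rw [Finset.mul_sum]
            refine Finset.sum_congr rfl ?_
            intro p _
            ring
          rw [hM2, h4, hPcard]
          ring
  -- vertex-side evaluation
  set lz : V → ℤ := fun v => ∑ u ∈ N v, (if deg T u = 1 then (1:ℤ) else 0) with hlz
  have hvert : ∑ p ∈ P, A p.1 p.2 = ∑ v, ∑ u ∈ N v, A v u := by
    rw [hP, sum_pairs_eq_sum_nbhd T A]
  have hSleaf : ∀ v, deg T v = 1 → ∑ u ∈ N v, A v u = -3 := by
    intro v hv
    have : ∀ u ∈ N v, A v u = -3 := by
      intro u _
      simp only [hA, hv, if_true, ite_true]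
    rw [Finset.sum_congr rfl this, Finset.sum_const, nsmul_eq_mul]
    have : (N v).card = 1 := hv
    rw [this]
    ring
  have hSnon : ∀ v, deg T v ≠ 1 → ∑ u ∈ N v, A v u = D v * (D v - 2) + lz v := by
    intro v hv
    have step : ∀ u ∈ N v, A v u = (if deg T u = 1 then (1:ℤ) else 0) + (D v - 2) := by
      intro u _
      simp only [hA, hv, if_false, ite_false]
      by_cases hu : deg T u = 1 <;> simp [hu] <;> ring
    rw [Finset.sum_congr rfl step, Finset.sum_add_distrib]
    rw [Finset.sum_const, nsmul_eq_mul]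
    have hcard : ((N v).card : ℤ) = D v := by rw [hD]; rfl
    rw [hcard, hlz]
    ring
  -- quadratic bound
  have hquad : ∀ v : V, 3 * (D v - 2) ≤ D v * (D v - 2) := by
    intro v
    rcases le_or_gt (D v) 2 with h | h
    · nlinarith
    · nlinarith
  -- split the vertex sum
  have hsplit : ∑ v, ∑ u ∈ N v, A v u
      = ∑ v ∈ leaves, (∑ u ∈ N v, A v u) + ∑ v ∈ Finset.univ.filter (fun v => ¬ deg T v = 1), (∑ u ∈ N v, A v u) := by
    rw [hlv, Finset.sum_filter_add_sum_filter_not]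
  have hleafpart : ∑ v ∈ leaves, (∑ u ∈ N v, A v u) = -3 * L := by
    have : ∀ v ∈ leaves, (∑ u ∈ N v, A v u) = -3 := by
      intro v hv
      rw [hlv, Finset.mem_filter] at hv
      exact hSleaf v hv.2
    rw [Finset.sum_congr rfl this, Finset.sum_const, nsmul_eq_mul, hL]
    ring
  -- nonleaf sums
  set NL := Finset.univ.filter (fun v => ¬ deg T v = 1) with hNL
  have hDnl : ∑ v ∈ NL, D v = 2 * ((n : ℤ) - 1) - L := by
    have h1 : ∑ v ∈ leaves, D v + ∑ v ∈ NL, D v = ∑ v, D v := by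
      rw [hlv, hNL, Finset.sum_filter_add_sum_filter_not]
    have h2 : ∑ v ∈ leaves, D v = L := by
      have : ∀ v ∈ leaves, D v = 1 := by
        intro v hv
        rw [hlv, Finset.mem_filter] at hv
        simp only [hD]; exact_mod_cast hv.2
      rw [Finset.sum_congr rfl this, Finset.sum_const, nsmul_eq_mul, hL]
      ring
    rw [hHand] at h1
    omega
  have hcardnl : (NL.card : ℤ) = (n : ℤ) - L := by
    have hsub : NL = Finset.univ \ leaves := by
      rw [hNL, hlv, Finset.filter_not]
    have hle : leaves.card ≤ n := by
      rw [hnn, ← Finset.card_univ]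
      exact Finset.card_le_univ _
    rw [hsub, Finset.card_sdiff_of_subset (Finset.subset_univ _), Finset.card_univ, ← hnn, hL]
    push_cast [hle]
    ring
  have hlzsum : ∑ v ∈ NL, lz v = L := by
    set g : V → V → ℤ := fun a b => if ¬ deg T a = 1 ∧ deg T b = 1 then 1 else 0 with hg
    have step1 : ∑ v ∈ NL, lz v = ∑ v, ∑ u ∈ N v, g v u := by
      rw [hNL, Finset.sum_filter]
      refine Finset.sum_congr rfl ?_
      intro v _
      by_cases hv : deg T v = 1
      · simp only [hv, not_true, if_false, ite_false]
        symm
        refine Finset.sum_eq_zero ?_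
        intro u _
        rw [hg]
        simp [hv]
      · simp only [hv, not_false_iff, if_true, ite_true]
        rw [hlz]
        refine Finset.sum_congr rfl ?_
        intro u _
        rw [hg]
        simp [hv]
    have step2 : ∑ v, ∑ u ∈ N v, g v u = ∑ v, ∑ u ∈ N v, g u v := by
      rw [hN, ← sum_pairs_eq_sum_nbhd T g, ← sum_pairs_eq_sum_nbhd' T g,
        sum_pairs_swap T g]
    have step3 : ∑ v, ∑ u ∈ N v, g u v = ∑ v, (if deg T v = 1 then (1:ℤ) else 0) := by
      refine Finset.sum_congr rfl ?_
      intro v _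
      by_cases hv : deg T v = 1
      · have hterm : ∀ u ∈ N v, g u v = 1 := by
          intro u hu
          rw [hN, Finset.mem_filter] at hu
          have hune : deg T u ≠ 1 := leaf_nbhd_not_leaf hc (by omega) hu.2 hv
          rw [hg]
          simp [hune, hv]
        rw [Finset.sum_congr rfl hterm, Finset.sum_const, nsmul_eq_mul]
        have hcard1 : (N v).card = 1 := hv
        rw [hcard1, hv]
        simp
      · have hterm : ∀ u ∈ N v, g u v = 0 := by
          intro u _
          rw [hg]
          simp [hv]
        rw [Finset.sum_congr rfl hterm, Finset.sum_const, nsmul_eq_mul]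
        simp [hv]
    have step4 : ∑ v, (if deg T v = 1 then (1:ℤ) else 0) = L := by
      rw [← Finset.sum_filter, ← hlv, hL]
      simp
    rw [step1, step2, step3, step4]
  -- combine vertex side
  have hvge : L - 6 ≤ ∑ v, ∑ u ∈ N v, A v u := by
    rw [hsplit, hleafpart]
    have h1 : ∑ v ∈ NL, (3 * (D v - 2) + lz v) ≤ ∑ v ∈ NL, (∑ u ∈ N v, A v u) := by
      refine Finset.sum_le_sum ?_
      intro v hv
      rw [hNL, Finset.mem_filter] at hv
      rw [hSnon v hv.2]
      have := hquad v
      linarith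
    have h2 : ∑ v ∈ NL, (3 * (D v - 2) + lz v) = 3 * (L - 2) + L := by
      rw [Finset.sum_add_distrib, hlzsum]
      have : ∑ v ∈ NL, 3 * (D v - 2) = 3 * (∑ v ∈ NL, D v) - 6 * (NL.card : ℤ) := by
        rw [Finset.sum_congr rfl (fun v _ => by ring :
          ∀ v ∈ NL, 3 * (D v - 2) = 3 * D v - 6), Finset.sum_sub_distrib,
          ← Finset.mul_sum, Finset.sum_const, nsmul_eq_mul]
        ring
      rw [this, hDnl, hcardnl]
      ring
    linarith
  -- final arithmetic
  have final : (4 * (n:ℤ) + (leaves.card:ℤ)) ≤ (M2 T : ℤ) + 10 := by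
    rw [← hL]
    linarith [hsum1, hvge, hvert.symm.le, hvert.le]
  exact_mod_cast final

end Aux

theorem stmt14 {V : Type*} [Fintype V] (T : SimpleGraph V) (hT : T.IsTree)
    (hn : 4 ≤ Fintype.card V) :
    4 * Fintype.card V + metricDim T - 9 ≤ M2 T ∧
      (Nonempty (T ≃g SimpleGraph.pathGraph (Fintype.card V)) →
        M2 T = 4 * Fintype.card V + metricDim T - 9) := by
  constructor
  · have h1 := md_le_leaves hT (by omega)
    have h2 := M2_ge hT hn
    omega
  · rintro ⟨e⟩
    have hmd : metricDim T = 1 := md_path T (by omega) e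
    have hM2' : M2 T = M2 (SimpleGraph.pathGraph (Fintype.card V)) := iso_M2 e
    rw [hM2', pg_M2 hn, hmd]
    omega
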